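/- Let K₀ be a constant real antisymmetric 3×3 matrix and let K : [τ₀, ∞) → Mat₃(ℝ) be continuous antisymmetric-matrix valued with ‖K(τ) − K₀‖ ≤ Ce^{−τ} for all τ ≥ τ₀. If A solves dA/dτ = −A·K(τ) with A(τ₀) ∈ SO(3), then A(τ) ∈ SO(3) for all τ, and there exists a constant orthogonal matrix A₀ such that ‖A(τ) − A₀e^{−τK₀}‖ ≤ C'e^{−τ} for all τ ≥ τ₀. -/

import Mathlib

open scoped Matrix
open Set

attribute [local instance] Matrix.linftyOpNormedRing Matrix.linftyOpNormedAlgebra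

noncomputable local instance : CompleteSpace (Matrix (Fin 3) (Fin 3) ℝ) :=
  FiniteDimensional.complete ℝ _

private lemma entry_abs_le_norm (M : Matrix (Fin 3) (Fin 3) ℝ) (i j : Fin 3) : |M i j| ≤ ‖M‖ := by
  have h1 : ‖M i j‖₊ ≤ ∑ k, ‖M i k‖₊ :=
    Finset.single_le_sum (f := fun k => ‖M i k‖₊) (fun _ _ => zero_le) (Finset.mem_univ j)
  have h2 : (∑ k, ‖M i k‖₊) ≤ Finset.univ.sup (fun i => ∑ j, ‖M i j‖₊) :=
    Finset.le_sup (f := fun i => ∑ j, ‖M i j‖₊) (Finset.mem_univ i)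
  calc |M i j| = ‖M i j‖ := (Real.norm_eq_abs _).symm
    _ ≤ _ := by rw [Matrix.linfty_opNorm_def]; exact_mod_cast h1.trans h2

private lemma norm_le_of_entries (M : Matrix (Fin 3) (Fin 3) ℝ) {c : ℝ} (h : ∀ i j, |M i j| ≤ c) :
    ‖M‖ ≤ 3 * c := by
  obtain ⟨i, -, hi⟩ := Finset.exists_mem_eq_sup Finset.univ ⟨0, Finset.mem_univ 0⟩
    (fun i => ∑ j, ‖M i j‖₊)
  rw [Matrix.linfty_opNorm_def, hi]
  push_cast
  rw [Fin.sum_univ_three]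
  have := h i 0; have := h i 1; have := h i 2
  simp only [coe_nnnorm, Real.norm_eq_abs] at *
  linarith

private lemma hasDerivAt_mat {f : ℝ → Matrix (Fin 3) (Fin 3) ℝ} {f' : Matrix (Fin 3) (Fin 3) ℝ}
    {τ : ℝ} (h : ∀ i j, HasDerivAt (fun s => f s i j) (f' i j) τ) : HasDerivAt f f' τ := by
  have key : ∀ g : Matrix (Fin 3) (Fin 3) ℝ,
      g = ∑ i, ∑ j, g i j • Matrix.single i j (1:ℝ) := by
    intro g
    conv_lhs => rw [Matrix.matrix_eq_sum_single g]
    refine Finset.sum_congr rfl fun i _ => Finset.sum_congr rfl fun j _ => ?_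
    rw [Matrix.smul_single, smul_eq_mul, mul_one]
  have hd : HasDerivAt (fun s => ∑ i, ∑ j, f s i j • Matrix.single i j (1:ℝ))
      (∑ i, ∑ j, f' i j • Matrix.single i j (1:ℝ)) τ := by
    apply HasDerivAt.fun_sum; intro i _
    apply HasDerivAt.fun_sum; intro j _
    exact (h i j).smul_const _
  rw [key f']
  convert hd using 1
  funext s; exact key (f s)

private lemma orth_entry_le (O : Matrix (Fin 3) (Fin 3) ℝ) (h : Oᵀ * O = 1) (i j : Fin 3) :
    |O i j| ≤ 1 := by
  have h1 : ∑ k, O k j * O k j = 1 := by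
    have := (Matrix.ext_iff.2 h) j j
    simpa [Matrix.mul_apply, Matrix.transpose_apply, Matrix.one_apply] using this
  have h2 : O i j * O i j ≤ ∑ k, O k j * O k j :=
    Finset.single_le_sum (f := fun k => O k j * O k j) (fun k _ => mul_self_nonneg _)
      (Finset.mem_univ i)
  exact abs_le_one_iff_mul_self_le_one.2 (le_of_le_of_eq h2 h1)

private lemma orth_norm_le (O : Matrix (Fin 3) (Fin 3) ℝ) (h : Oᵀ * O = 1) : ‖O‖ ≤ 3 := by
  have := norm_le_of_entries O (orth_entry_le O h)
  linarith

private lemma aux_part1 (τ₀ Lk : ℝ) (K : ℝ → Matrix (Fin 3) (Fin 3) ℝ)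
    (hKanti : ∀ τ ∈ Set.Ici τ₀, (K τ)ᵀ = -(K τ))
    (hKn : ∀ τ ∈ Set.Ici τ₀, ‖K τ‖ ≤ Lk)
    (A : ℝ → Matrix (Fin 3) (Fin 3) ℝ)
    (hA : ∀ τ ∈ Set.Ici τ₀, ∀ i j,
      HasDerivAt (fun s => A s i j) ((-(A τ * K τ)) i j) τ)
    (hA₀orth : (A τ₀)ᵀ * A τ₀ = 1) :
    ∀ τ ∈ Set.Ici τ₀, (A τ)ᵀ * A τ = 1 := by
  set G : ℝ → Matrix (Fin 3) (Fin 3) ℝ := fun t => (A t)ᵀ * A t - 1 with hGdef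
  have hGd : ∀ τ ∈ Set.Ici τ₀, HasDerivAt G (K τ * G τ - G τ * K τ) τ := by
    intro τ hτ
    apply hasDerivAt_mat
    intro i j
    have h1 : HasDerivAt (fun s => ∑ k, A s k i * A s k j)
        (∑ k, ((-(A τ * K τ)) k i * A τ k j + A τ k i * (-(A τ * K τ)) k j)) τ :=
      HasDerivAt.fun_sum fun k _ => (hA τ hτ k i).mul (hA τ hτ k j)
    have h2 := h1.sub_const ((1 : Matrix (Fin 3) (Fin 3) ℝ) i j)
    have hfun : (fun s => (∑ k, A s k i * A s k j) - (1 : Matrix (Fin 3) (Fin 3) ℝ) i j)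
        = fun s => G s i j := by
      funext s
      simp [hGdef, Matrix.sub_apply, Matrix.mul_apply, Matrix.transpose_apply]
    rw [hfun] at h2
    refine h2.congr_deriv (Eq.symm ?_)
    have hKt := hKanti τ hτ
    have hmat : K τ * G τ - G τ * K τ = (-(A τ * K τ))ᵀ * A τ + (A τ)ᵀ * (-(A τ * K τ)) := by
      simp only [hGdef, Matrix.transpose_neg, Matrix.transpose_mul, hKt]
      noncomm_ring
    rw [hmat]
    simp [Matrix.add_apply, Matrix.mul_apply, Matrix.transpose_apply, Finset.sum_add_distrib,
      mul_comm]
  have hLk : 0 ≤ Lk := le_trans (norm_nonneg _) (hKn τ₀ (Set.mem_Ici.mpr le_rfl))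
  have hG0 : G τ₀ = 0 := by simp [hGdef, hA₀orth]
  intro b hb
  have key := norm_le_gronwallBound_of_norm_deriv_right_le (f := G)
    (f' := fun x => K x * G x - G x * K x) (δ := 0) (K := 2 * Lk) (ε := 0) (a := τ₀) (b := b)
    (fun x hx => ((hGd x (Set.mem_Ici.mpr hx.1)).continuousAt).continuousWithinAt)
    (fun x hx => (hGd x (Set.mem_Ici.mpr hx.1)).hasDerivWithinAt)
    (by rw [hG0]; simp)
    (by
      intro x hx
      have hx' : x ∈ Set.Ici τ₀ := Set.mem_Ici.mpr hx.1
      have h1 : ‖K x * G x‖ ≤ Lk * ‖G x‖ := by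
        calc ‖K x * G x‖ ≤ ‖K x‖ * ‖G x‖ := Matrix.linfty_opNorm_mul _ _
          _ ≤ Lk * ‖G x‖ := by
            have := hKn x hx'
            nlinarith [norm_nonneg (G x)]
      have h2 : ‖G x * K x‖ ≤ Lk * ‖G x‖ := by
        calc ‖G x * K x‖ ≤ ‖G x‖ * ‖K x‖ := Matrix.linfty_opNorm_mul _ _
          _ ≤ Lk * ‖G x‖ := by
            have := hKn x hx'
            nlinarith [norm_nonneg (G x)]
      calc ‖K x * G x - G x * K x‖ ≤ ‖K x * G x‖ + ‖G x * K x‖ := norm_sub_le _ _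
        _ ≤ 2 * Lk * ‖G x‖ + 0 := by linarith)
  have := key b ⟨hb, le_rfl⟩
  rw [gronwallBound_ε0_δ0] at this
  have hGb : G b = 0 := norm_le_zero_iff.mp this
  have : (A b)ᵀ * A b - 1 = 0 := hGb
  linear_combination (norm := module) this

/-- Matrix exponential of a real 3×3 matrix. -/
noncomputable def matExp (M : Matrix (Fin 3) (Fin 3) ℝ) : Matrix (Fin 3) (Fin 3) ℝ :=
  letI : NormedRing (Matrix (Fin 3) (Fin 3) ℝ) := Matrix.linftyOpNormedRing
  letI : NormedAlgebra ℝ (Matrix (Fin 3) (Fin 3) ℝ) := Matrix.linftyOpNormedAlgebra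
  NormedSpace.exp M

/-- Asymptotic ODE lemma for the near-horizon frame: if `A' = -A·K(τ)` with `K`
antisymmetric and converging exponentially (entrywise) to a constant antisymmetric `K₀`,
and `A(τ₀) ∈ SO(3)`, then `A(τ) ∈ SO(3)` for all `τ ≥ τ₀` and there is a constant
orthogonal matrix `A₀` with `A(τ) = A₀ e^{-τK₀} + O(e^{-τ})` entrywise. -/
theorem stmt_10 (τ₀ C : ℝ) (hC : 0 ≤ C)
    (K₀ : Matrix (Fin 3) (Fin 3) ℝ) (hK₀ : K₀ᵀ = -K₀)
    (K : ℝ → Matrix (Fin 3) (Fin 3) ℝ)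
    (hKcont : ∀ i j, ContinuousOn (fun τ => K τ i j) (Set.Ici τ₀))
    (hKanti : ∀ τ ∈ Set.Ici τ₀, (K τ)ᵀ = -(K τ))
    (hKconv : ∀ τ ∈ Set.Ici τ₀, ∀ i j, |(K τ - K₀) i j| ≤ C * Real.exp (-τ))
    (A : ℝ → Matrix (Fin 3) (Fin 3) ℝ)
    (hA : ∀ τ ∈ Set.Ici τ₀, ∀ i j,
      HasDerivAt (fun s => A s i j) ((-(A τ * K τ)) i j) τ)
    (hA₀orth : (A τ₀)ᵀ * A τ₀ = 1) (hA₀det : (A τ₀).det = 1) :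
    (∀ τ ∈ Set.Ici τ₀, (A τ)ᵀ * A τ = 1 ∧ (A τ).det = 1) ∧
    ∃ A₀ : Matrix (Fin 3) (Fin 3) ℝ, A₀ᵀ * A₀ = 1 ∧
      ∃ C' : ℝ, ∀ τ ∈ Set.Ici τ₀, ∀ i j,
        |(A τ - A₀ * matExp ((-τ) • K₀)) i j| ≤ C' * Real.exp (-τ) := by
  -- norm bounds on K
  have hKd : ∀ τ ∈ Set.Ici τ₀, ‖K τ - K₀‖ ≤ 3 * (C * Real.exp (-τ)) :=
    fun τ hτ => norm_le_of_entries _ (hKconv τ hτ)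
  have hKn : ∀ τ ∈ Set.Ici τ₀, ‖K τ‖ ≤ ‖K₀‖ + 3 * (C * Real.exp (-τ₀)) := by
    intro τ hτ
    have h1 : Real.exp (-τ) ≤ Real.exp (-τ₀) := Real.exp_le_exp.2 (neg_le_neg hτ)
    have h2 := hKd τ hτ
    have h3 := norm_sub_norm_le (K τ) K₀
    nlinarith
  -- Part 1: orthogonality
  have part1 : ∀ τ ∈ Set.Ici τ₀, (A τ)ᵀ * A τ = 1 :=
    aux_part1 τ₀ (‖K₀‖ + 3 * (C * Real.exp (-τ₀))) K hKanti hKn A hA hA₀orth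
  -- Part 1: determinant
  have hAcont : ∀ i j, ContinuousOn (fun s => A s i j) (Set.Ici τ₀) :=
    fun i j x hx => ((hA x hx i j).continuousAt).continuousWithinAt
  have hdetc : ContinuousOn (fun s => (A s).det) (Set.Ici τ₀) := by
    have heq : (fun s => (A s).det) = fun s =>
        A s 0 0 * A s 1 1 * A s 2 2 - A s 0 0 * A s 1 2 * A s 2 1 -
          A s 0 1 * A s 1 0 * A s 2 2 + A s 0 1 * A s 1 2 * A s 2 0 +
          A s 0 2 * A s 1 0 * A s 2 1 - A s 0 2 * A s 1 1 * A s 2 0 :=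
      funext fun s => Matrix.det_fin_three (A s)
    rw [heq]
    exact ((((((hAcont 0 0).mul (hAcont 1 1)).mul (hAcont 2 2)).sub
      (((hAcont 0 0).mul (hAcont 1 2)).mul (hAcont 2 1))).sub
      (((hAcont 0 1).mul (hAcont 1 0)).mul (hAcont 2 2))).add
      (((hAcont 0 1).mul (hAcont 1 2)).mul (hAcont 2 0))).add
      (((hAcont 0 2).mul (hAcont 1 0)).mul (hAcont 2 1)) |>.sub
      (((hAcont 0 2).mul (hAcont 1 1)).mul (hAcont 2 0))
  have hdetsq : ∀ τ ∈ Set.Ici τ₀, (A τ).det * (A τ).det = 1 := by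
    intro τ hτ
    have h := congrArg Matrix.det (part1 τ hτ)
    rwa [Matrix.det_mul, Matrix.det_transpose, Matrix.det_one] at h
  have hdet : ∀ τ ∈ Set.Ici τ₀, (A τ).det = 1 := by
    intro τ hτ
    rcases mul_self_eq_one_iff.mp (hdetsq τ hτ) with h | h
    · exact h
    · exfalso
      have hsub := intermediate_value_Icc' (Set.mem_Ici.mp hτ)
        (hdetc.mono Set.Icc_subset_Ici_self)
      have h0 : (0:ℝ) ∈ Set.Icc ((A τ).det) ((A τ₀).det) := by
        rw [h, hA₀det]; constructor <;> norm_num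
      obtain ⟨σ, hσ, hσ0⟩ := hsub h0
      have hc := hdetsq σ (Set.Icc_subset_Ici_self hσ)
      have hσ0' : (A σ).det = 0 := hσ0
      rw [hσ0'] at hc; norm_num at hc
  -- Part 2 setup
  set Ex : ℝ → Matrix (Fin 3) (Fin 3) ℝ := fun t => NormedSpace.exp (t • K₀) with hExdef
  have hExd : ∀ t : ℝ, HasDerivAt Ex (K₀ * Ex t) t := by
    intro t
    rw [hExdef]
    exact hasDerivAt_exp_smul_const' K₀ t
  have hExmul : ∀ s t : ℝ, Ex s * Ex t = Ex (s + t) := by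
    intro s t
    show NormedSpace.exp (s • K₀) * NormedSpace.exp (t • K₀) = NormedSpace.exp ((s+t) • K₀)
    rw [add_smul]
    exact (Matrix.exp_add_of_commute _ _ (((Commute.refl K₀).smul_left s).smul_right t)).symm
  have hEx0 : Ex 0 = 1 := by
    show NormedSpace.exp ((0:ℝ) • K₀) = 1
    rw [zero_smul, NormedSpace.exp_zero]
  have hExinv : ∀ t : ℝ, Ex t * Ex (-t) = 1 := by
    intro t
    rw [hExmul, add_neg_cancel, hEx0]
  have hExT : ∀ t : ℝ, (Ex t)ᵀ = Ex (-t) := by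
    intro t
    show (NormedSpace.exp (t • K₀))ᵀ = NormedSpace.exp ((-t) • K₀)
    rw [← Matrix.exp_transpose]
    congr 1
    rw [Matrix.transpose_smul, hK₀]
    module
  have hExorth : ∀ t : ℝ, (Ex t)ᵀ * Ex t = 1 := by
    intro t
    rw [hExT]
    have := hExinv (-t)
    rwa [neg_neg] at this
  have hExn : ∀ t : ℝ, ‖Ex t‖ ≤ 3 := fun t => orth_norm_le _ (hExorth t)
  have hAn : ∀ τ ∈ Set.Ici τ₀, ‖A τ‖ ≤ 3 := fun τ hτ => orth_norm_le _ (part1 τ hτ)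
  have hAd : ∀ τ ∈ Set.Ici τ₀, HasDerivAt A (-(A τ * K τ)) τ :=
    fun τ hτ => hasDerivAt_mat (hA τ hτ)
  set Y : ℝ → Matrix (Fin 3) (Fin 3) ℝ := fun t => A t * Ex t with hYdef
  have hYd : ∀ τ ∈ Set.Ici τ₀, HasDerivAt Y (A τ * (K₀ - K τ) * Ex τ) τ := by
    intro τ hτ
    have h := (hAd τ hτ).mul (hExd τ)
    rw [hYdef]
    refine h.congr_deriv ?_
    noncomm_ring
  have hYd_norm : ∀ τ ∈ Set.Ici τ₀, ‖A τ * (K₀ - K τ) * Ex τ‖ ≤ 27 * C * Real.exp (-τ) := by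
    intro τ hτ
    have e1 : ‖K₀ - K τ‖ ≤ 3 * (C * Real.exp (-τ)) := by
      refine norm_le_of_entries _ (fun i j => ?_)
      have h1 : K₀ - K τ = -(K τ - K₀) := (neg_sub _ _).symm
      rw [h1, Matrix.neg_apply, abs_neg]
      exact hKconv τ hτ i j
    have n1 : ‖A τ * (K₀ - K τ)‖ ≤ 3 * (3 * (C * Real.exp (-τ))) :=
      le_trans (Matrix.linfty_opNorm_mul _ _)
        (mul_le_mul (hAn τ hτ) e1 (norm_nonneg _) (by norm_num))
    have n2 : ‖A τ * (K₀ - K τ) * Ex τ‖ ≤ 3 * (3 * (C * Real.exp (-τ))) * 3 :=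
      le_trans (Matrix.linfty_opNorm_mul _ _)
        (mul_le_mul n1 (hExn τ) (norm_nonneg _) (by positivity))
    have : 3 * (3 * (C * Real.exp (-τ))) * 3 = 27 * C * Real.exp (-τ) := by ring
    linarith
  have hYdiff : ∀ τ₁, τ₀ ≤ τ₁ → ∀ σ, τ₁ ≤ σ → ‖Y σ - Y τ₁‖ ≤ 27 * C * Real.exp (-τ₁) := by
    intro τ₁ hτ₁ σ hσ
    have hφ : ∀ x : ℝ, HasDerivAt
        (fun s => 27 * C * Real.exp (-τ₁) - 27 * C * Real.exp (-s)) (27 * C * Real.exp (-x)) x := by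
      intro x
      have h1 : HasDerivAt (fun s : ℝ => Real.exp (-s)) (-Real.exp (-x)) x := by
        exact ((Real.hasDerivAt_exp (-x)).comp x (hasDerivAt_neg x)).congr_deriv (by ring)
      have h2 := (hasDerivAt_const x (27 * C * Real.exp (-τ₁))).sub (h1.const_mul (27 * C))
      refine h2.congr_deriv ?_
      ring
    have key := image_norm_le_of_norm_deriv_right_le_deriv_boundary
      (f := fun s => Y s - Y τ₁) (f' := fun x => A x * (K₀ - K x) * Ex x) (a := τ₁) (b := σ)
      (B := fun s => 27 * C * Real.exp (-τ₁) - 27 * C * Real.exp (-s))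
      (B' := fun x => 27 * C * Real.exp (-x))
      (fun x hx => (((hYd x (Set.mem_Ici.mpr (le_trans hτ₁ hx.1))).continuousAt).sub
        continuousAt_const).continuousWithinAt)
      (fun x hx => ((hYd x (Set.mem_Ici.mpr (le_trans hτ₁ hx.1))).sub_const _).hasDerivWithinAt)
      (by simp)
      hφ
      (fun x hx => hYd_norm x (Set.mem_Ici.mpr (le_trans hτ₁ hx.1)))
    have h2 := key ⟨hσ, le_rfl⟩
    have h3 : 0 ≤ 27 * C * Real.exp (-σ) := by positivity
    linarith
  -- Cauchy sequence and limit
  set seq : ℕ → Matrix (Fin 3) (Fin 3) ℝ := fun n => Y (τ₀ + n) with hseqdef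
  have hseqmem : ∀ n : ℕ, τ₀ ≤ τ₀ + (n : ℝ) := fun n => le_add_of_nonneg_right (Nat.cast_nonneg n)
  have hcau : CauchySeq seq := by
    apply cauchySeq_of_le_tendsto_0 (b := fun N : ℕ => 54 * C * Real.exp (-(τ₀ + N)))
    · intro n m N hn hm
      have b1 := hYdiff (τ₀ + N) (hseqmem N) (τ₀ + n) (add_le_add_right (Nat.cast_le.2 hn) τ₀)
      have b2 := hYdiff (τ₀ + N) (hseqmem N) (τ₀ + m) (add_le_add_right (Nat.cast_le.2 hm) τ₀)
      have tri : dist (seq n) (seq m) ≤ dist (seq n) (seq N) + dist (seq N) (seq m) :=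
        dist_triangle _ _ _
      have d1 : dist (seq n) (seq N) = ‖Y (τ₀ + n) - Y (τ₀ + N)‖ := by
        rw [hseqdef]; exact dist_eq_norm _ _
      have d2 : dist (seq N) (seq m) = ‖Y (τ₀ + m) - Y (τ₀ + N)‖ := by
        rw [hseqdef, dist_comm]; exact dist_eq_norm _ _
      rw [d1, d2] at tri
      calc dist (seq n) (seq m) ≤ _ := tri
        _ ≤ 27 * C * Real.exp (-(τ₀ + N)) + 27 * C * Real.exp (-(τ₀ + N)) := add_le_add b1 b2
        _ = 54 * C * Real.exp (-(τ₀ + N)) := by ring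
    · have h1 : Filter.Tendsto (fun N : ℕ => τ₀ + (N : ℝ)) Filter.atTop Filter.atTop :=
        Filter.tendsto_atTop_add_const_left _ _ tendsto_natCast_atTop_atTop
      have h2 : Filter.Tendsto (fun N : ℕ => -(τ₀ + (N : ℝ))) Filter.atTop Filter.atBot :=
        Filter.tendsto_neg_atTop_atBot.comp h1
      have h3 : Filter.Tendsto (fun N : ℕ => Real.exp (-(τ₀ + N))) Filter.atTop (nhds 0) :=
        Real.tendsto_exp_atBot.comp h2
      simpa using h3.const_mul (54 * C)
  obtain ⟨A₀, hA₀⟩ := cauchySeq_tendsto_of_complete hcau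
  have hYA₀ : ∀ τ ∈ Set.Ici τ₀, ‖Y τ - A₀‖ ≤ 27 * C * Real.exp (-τ) := by
    intro τ hτ
    have hlim : Filter.Tendsto (fun n => ‖Y τ - seq n‖) Filter.atTop (nhds ‖Y τ - A₀‖) :=
      (Filter.Tendsto.sub tendsto_const_nhds hA₀).norm
    refine le_of_tendsto hlim ?_
    filter_upwards [Filter.eventually_ge_atTop (Nat.ceil (τ - τ₀))] with n hn
    have hτn : τ ≤ τ₀ + n := by
      have h1 := Nat.le_ceil (τ - τ₀)
      have h2 : ((Nat.ceil (τ - τ₀) : ℕ) : ℝ) ≤ n := Nat.cast_le.2 hn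
      linarith
    have hb := hYdiff τ hτ (τ₀ + n) hτn
    have : ‖Y τ - seq n‖ = ‖Y (τ₀ + n) - Y τ‖ := by rw [hseqdef, norm_sub_rev]
    rw [this]
    exact hb
  have horthA₀ : A₀ᵀ * A₀ = 1 := by
    have hYorth : ∀ τ ∈ Set.Ici τ₀, (Y τ)ᵀ * Y τ = 1 := by
      intro τ hτ
      rw [hYdef]
      show (A τ * Ex τ)ᵀ * (A τ * Ex τ) = 1
      rw [Matrix.transpose_mul, Matrix.mul_assoc, ← Matrix.mul_assoc (A τ)ᵀ, part1 τ hτ,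
        Matrix.one_mul, hExorth]
    have htrans : Filter.Tendsto (fun n : ℕ => (seq n)ᵀ) Filter.atTop (nhds A₀ᵀ) := by
      refine tendsto_iff_norm_sub_tendsto_zero.mpr ?_
      have hb : ∀ n, ‖(seq n)ᵀ - A₀ᵀ‖ ≤ 3 * ‖seq n - A₀‖ := by
        intro n
        have heq : (seq n)ᵀ - A₀ᵀ = (seq n - A₀)ᵀ := (Matrix.transpose_sub _ _).symm
        rw [heq]
        exact norm_le_of_entries _ (fun i j => by
          simpa [Matrix.transpose_apply] using entry_abs_le_norm (seq n - A₀) j i)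
      apply squeeze_zero (fun n => norm_nonneg _) hb
      have h0 := tendsto_iff_norm_sub_tendsto_zero.mp hA₀
      simpa using h0.const_mul 3
    have hmul : Filter.Tendsto (fun n : ℕ => (seq n)ᵀ * seq n) Filter.atTop (nhds (A₀ᵀ * A₀)) :=
      htrans.mul hA₀
    have hconst : (fun n : ℕ => (seq n)ᵀ * seq n) = fun _ => (1 : Matrix (Fin 3) (Fin 3) ℝ) :=
      funext fun n => hYorth _ (hseqmem n)
    rw [hconst] at hmul
    exact tendsto_nhds_unique hmul tendsto_const_nhds
  refine ⟨fun τ hτ => ⟨part1 τ hτ, hdet τ hτ⟩, A₀, horthA₀, 81 * C, ?_⟩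
  intro τ hτ i j
  have hAeq : A τ - A₀ * matExp ((-τ) • K₀) = (Y τ - A₀) * Ex (-τ) := by
    have h1 : matExp ((-τ) • K₀) = Ex (-τ) := rfl
    have h2 : Y τ * Ex (-τ) = A τ := by
      rw [hYdef]
      show A τ * Ex τ * Ex (-τ) = A τ
      rw [Matrix.mul_assoc, hExinv, Matrix.mul_one]
    rw [h1, Matrix.sub_mul, h2]
  rw [hAeq]
  have hb := entry_abs_le_norm ((Y τ - A₀) * Ex (-τ)) i j
  have hn : ‖(Y τ - A₀) * Ex (-τ)‖ ≤ 27 * C * Real.exp (-τ) * 3 :=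
    le_trans (Matrix.linfty_opNorm_mul _ _)
      (mul_le_mul (hYA₀ τ hτ) (hExn (-τ)) (norm_nonneg _) (by positivity))
  have heq : 27 * C * Real.exp (-τ) * 3 = 81 * C * Real.exp (-τ) := by ring
  linarith
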